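/- A unital C*-algebra has the 2-splitting property if and only if it contains two purely full pairwise orthogonal elements (i.e., purely full elements a, b with ab = 0). -/

import Mathlib

/-- An element `a` of a C*-algebra `A` is *full* if the only closed two-sided ideal of `A`
containing `a` is `A` itself. -/
def IsFullElem {A : Type*} [NonUnitalNonAssocRing A] [TopologicalSpace A] (a : A) : Prop :=
  ∀ I : TwoSidedIdeal A, IsClosed (I : Set A) → a ∈ I → I = ⊤

/-- A C*-algebra has the *2-splitting property* if it contains two full positive elements
`a, b` with `a * b = 0`. -/
def TwoSplitting (A : Type*) [CStarAlgebra A] [PartialOrder A] [StarOrderedRing A] : Prop :=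
  ∃ a b : A, 0 ≤ a ∧ 0 ≤ b ∧ IsFullElem a ∧ IsFullElem b ∧ a * b = 0

/-- A positive contraction `a` in a unital C*-algebra is *purely full* if `(a - ε)₊` is full
for every `ε ∈ [0, 1)`. -/
def PurelyFull {A : Type*} [CStarAlgebra A] [PartialOrder A] [StarOrderedRing A] (a : A) :
    Prop :=
  0 ≤ a ∧ ‖a‖ ≤ 1 ∧
    ∀ ε : ℝ, 0 ≤ ε → ε < 1 → IsFullElem (cfc (fun t : ℝ => max (t - ε) 0) a)

section Aux

variable {A : Type*} [CStarAlgebra A] [PartialOrder A] [StarOrderedRing A]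

local notation "σₙ" => quasispectrum

/-- If `a` is selfadjoint and `x` annihilates `a` on both sides, then `x` annihilates
`cfcₙ f a` for any continuous `f` vanishing at zero. -/
lemma cfcnAux_mul_eq_zero (a x : A) (ha : IsSelfAdjoint a)
    (h1 : a * x = 0) (h2 : x * a = 0) (f : ℝ → ℝ) (hf : Continuous f) (hf0 : f 0 = 0) :
    cfcₙ f a * x = 0 ∧ x * cfcₙ f a = 0 := by
  rw [cfcₙ_apply f a hf.continuousOn hf0 ha]
  constructor
  · refine ContinuousMapZero.nonUnitalStarAlgHom_apply_mul_eq_zero (cfcₙHom ha) x ?_ ?_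
      (cfcₙHom_continuous ha) _
    · rw [cfcₙHom_id ha, h1]
    · rw [star_trivial, cfcₙHom_id ha, h1]
  · refine ContinuousMapZero.mul_nonUnitalStarAlgHom_apply_eq_zero (cfcₙHom ha) x ?_ ?_
      (cfcₙHom_continuous ha) _
    · rw [cfcₙHom_id ha, h2]
    · rw [star_trivial, cfcₙHom_id ha, h2]

/-- The norm estimate `‖a - (a - δ)₊‖ ≤ δ`. -/
lemma norm_sub_cut_le (a : A) (ha : 0 ≤ a) {δ : ℝ} (hδ : 0 ≤ δ) :
    ‖a - cfc (fun t : ℝ => max (t - δ) 0) a‖ ≤ δ := by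
  have ha' : IsSelfAdjoint a := .of_nonneg ha
  have h1 : a - cfc (fun t : ℝ => max (t - δ) 0) a
      = cfc (fun t : ℝ => t - max (t - δ) 0) a := by
    rw [cfc_sub (fun t : ℝ => t) (fun t : ℝ => max (t - δ) 0) a (by fun_prop) (by fun_prop),
      cfc_id' ℝ a]
  rw [h1]
  refine norm_cfc_le hδ fun x hx => ?_
  have hx0 : 0 ≤ x := spectrum_nonneg_of_nonneg ha hx
  rw [Real.norm_eq_abs]
  rcases le_total x δ with h | h
  · rw [max_eq_right (by linarith), sub_zero, abs_of_nonneg hx0]; exact h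
  · rw [max_eq_left (by linarith), sub_sub_cancel, abs_of_nonneg hδ]

/-- If `a ≥ 0` is full, then `(a - δ)₊` is full for some `δ > 0`; in fact it generates
everything as a (not necessarily closed) two-sided ideal. -/
lemma exists_cut_full (a : A) (ha : 0 ≤ a) (hfull : IsFullElem a) :
    ∃ δ : ℝ, 0 < δ ∧
      ∀ I : TwoSidedIdeal A, cfc (fun t : ℝ => max (t - δ) 0) a ∈ I → I = ⊤ := by
  classical
  set I₀ : TwoSidedIdeal A := TwoSidedIdeal.span {a} with hI₀
  let J : TwoSidedIdeal A := TwoSidedIdeal.mk' (closure (I₀ : Set A))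
    (subset_closure I₀.zero_mem)
    (fun hx hy => map_mem_closure₂ continuous_add hx hy fun u hu v hv => I₀.add_mem hu hv)
    (fun hx => map_mem_closure continuous_neg hx fun u hu => I₀.neg_mem hu)
    (fun {x y} hy => map_mem_closure (continuous_mul_left x) hy fun u hu =>
      I₀.mul_mem_left x u hu)
    (fun {x y} hx => map_mem_closure (f := fun b => b * y) (continuous_mul_right y) hx
      fun u hu => I₀.mul_mem_right u y hu)
  have hJc : IsClosed (J : Set A) := by
    rw [TwoSidedIdeal.coe_mk']; exact isClosed_closure
  have haJ : a ∈ J := by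
    rw [TwoSidedIdeal.mem_mk']
    exact subset_closure (TwoSidedIdeal.subset_span rfl)
  have hJtop : J = ⊤ := hfull J hJc haJ
  have h1J : (1 : A) ∈ closure (I₀ : Set A) := by
    have h1 : (1 : A) ∈ J := hJtop ▸ TwoSidedIdeal.mem_top A
    rwa [TwoSidedIdeal.mem_mk'] at h1
  obtain ⟨s, hsI, hs⟩ : ∃ s ∈ (I₀ : Set A), dist (1 : A) s < 1/2 :=
    Metric.mem_closure_iff.mp h1J _ (by norm_num)
  have main : ∀ s ∈ I₀, ∃ C : ℝ, 0 ≤ C ∧ ∀ δ : ℝ, 0 ≤ δ → ∃ t : A,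
      (∀ I : TwoSidedIdeal A, cfc (fun u : ℝ => max (u - δ) 0) a ∈ I → t ∈ I) ∧
        ‖s - t‖ ≤ C * δ := by
    intro s hs
    rw [TwoSidedIdeal.mem_span_iff_mem_addSubgroup_closure] at hs
    induction hs using AddSubgroup.closure_induction with
    | mem x hx =>
      obtain ⟨w, ⟨r, -, a', ha', rfl⟩, y, -, rfl⟩ := hx
      rw [Set.mem_singleton_iff] at ha'
      rw [ha']
      refine ⟨‖r‖ * ‖y‖, by positivity, fun δ hδ =>
        ⟨r * cfc (fun u : ℝ => max (u - δ) 0) a * y,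
          fun I hI => I.mul_mem_right _ _ (I.mul_mem_left _ _ hI), ?_⟩⟩
      have heq : r * a * y - r * cfc (fun u : ℝ => max (u - δ) 0) a * y
          = r * (a - cfc (fun u : ℝ => max (u - δ) 0) a) * y := by noncomm_ring
      rw [heq]
      calc ‖r * (a - cfc (fun u : ℝ => max (u - δ) 0) a) * y‖
          ≤ ‖r * (a - cfc (fun u : ℝ => max (u - δ) 0) a)‖ * ‖y‖ := norm_mul_le _ _
        _ ≤ ‖r‖ * ‖a - cfc (fun u : ℝ => max (u - δ) 0) a‖ * ‖y‖ :=
            mul_le_mul_of_nonneg_right (norm_mul_le _ _) (norm_nonneg _)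
        _ ≤ ‖r‖ * δ * ‖y‖ := by
            have := norm_sub_cut_le a ha hδ
            gcongr
        _ = ‖r‖ * ‖y‖ * δ := by ring
    | zero => exact ⟨0, le_refl 0, fun δ hδ => ⟨0, fun I _ => I.zero_mem, by simp⟩⟩
    | add x y hx hy ihx ihy =>
      obtain ⟨C₁, hC₁, h₁⟩ := ihx
      obtain ⟨C₂, hC₂, h₂⟩ := ihy
      refine ⟨C₁ + C₂, by positivity, fun δ hδ => ?_⟩
      obtain ⟨t₁, m₁, n₁⟩ := h₁ δ hδ
      obtain ⟨t₂, m₂, n₂⟩ := h₂ δ hδ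
      refine ⟨t₁ + t₂, fun I hI => I.add_mem (m₁ I hI) (m₂ I hI), ?_⟩
      calc ‖x + y - (t₁ + t₂)‖ = ‖(x - t₁) + (y - t₂)‖ := by congr 1; abel
        _ ≤ ‖x - t₁‖ + ‖y - t₂‖ := norm_add_le _ _
        _ ≤ C₁ * δ + C₂ * δ := add_le_add n₁ n₂
        _ = (C₁ + C₂) * δ := by ring
    | neg x hx ihx =>
      obtain ⟨C, hC, h⟩ := ihx
      refine ⟨C, hC, fun δ hδ => ?_⟩
      obtain ⟨t, m, n⟩ := h δ hδ
      refine ⟨-t, fun I hI => I.neg_mem (m I hI), ?_⟩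
      rw [show -x - -t = -(x - t) by abel, norm_neg]
      exact n
  obtain ⟨C, hC, hmain⟩ := main s hsI
  set δ : ℝ := 1 / (2 * (C + 1)) with hδdef
  have hδpos : 0 < δ := by positivity
  obtain ⟨t, htI, htn⟩ := hmain δ hδpos.le
  have h2 : (C + 1) * δ = 1/2 := by
    rw [hδdef]; field_simp
  have hCδ : C * δ < 1/2 := by nlinarith
  have hnt : ‖1 - t‖ < 1 := by
    have e1 : ‖(1 : A) - t‖ ≤ ‖(1 : A) - s‖ + ‖s - t‖ := by
      simpa using norm_add_le ((1 : A) - s) (s - t)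
    rw [dist_eq_norm] at hs
    have := htn.trans_lt hCδ
    linarith
  have hu : IsUnit t := by
    have h' := (Units.oneSub ((1 : A) - t) hnt).isUnit
    simpa using h'
  obtain ⟨u, hu⟩ := hu
  refine ⟨δ, hδpos, fun I hI => ?_⟩
  refine eq_top_iff.mpr fun x _ => ?_
  have hx' : x * ↑u⁻¹ * t ∈ I := I.mul_mem_left _ _ (htI I hI)
  rwa [← hu, mul_assoc, Units.inv_mul, mul_one] at hx'

/-- From a full positive element, construct a purely full element with compatible
annihilation properties. -/
lemma purelyFull_of_full (a : A) (ha : 0 ≤ a) (hfull : IsFullElem a) :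
    ∃ a' : A, PurelyFull a' ∧
      ∀ x : A, a * x = 0 → x * a = 0 → a' * x = 0 ∧ x * a' = 0 := by
  obtain ⟨δ, hδ, hcut⟩ := exists_cut_full a ha hfull
  have ha' : IsSelfAdjoint a := .of_nonneg ha
  set g : ℝ → ℝ := fun t => min (δ⁻¹ * t) 1 with hg
  have hgc : Continuous g := by fun_prop
  have hg0 : g 0 = 0 := by simp [hg]
  refine ⟨cfc g a, ⟨?_, ?_, ?_⟩, fun x hx1 hx2 => ?_⟩
  · exact cfc_nonneg fun x hx =>
      le_min (mul_nonneg (inv_nonneg.2 hδ.le) (spectrum_nonneg_of_nonneg ha hx)) zero_le_one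
  · refine norm_cfc_le zero_le_one fun x hx => ?_
    have hx0 := spectrum_nonneg_of_nonneg ha hx
    have h0g : 0 ≤ g x := le_min (mul_nonneg (inv_nonneg.2 hδ.le) hx0) zero_le_one
    have h1g : g x ≤ 1 := min_le_right _ _
    rw [Real.norm_eq_abs, abs_le]
    constructor <;> linarith
  · intro ε hε0 hε1 I hIc hI
    have hcomp : cfc (fun t : ℝ => max (t - ε) 0) (cfc g a)
        = cfc (fun t : ℝ => max (g t - ε) 0) a := by
      rw [← cfc_comp (fun t : ℝ => max (t - ε) 0) g a ha'
        (Continuous.continuousOn (by fun_prop)) hgc.continuousOn]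
      exact cfc_congr fun x _ => rfl
    rw [hcomp] at hI
    set k : ℝ → ℝ := fun t => (1 - ε)⁻¹ * max (t - δ) 0 with hk
    have hprod : cfc (fun t : ℝ => max (g t - ε) 0) a * cfc k a
        = cfc (fun t : ℝ => max (t - δ) 0) a := by
      rw [← cfc_mul _ _ a (by fun_prop) (by fun_prop)]
      refine cfc_congr fun x _ => ?_
      rcases le_or_gt x δ with h | h
      · rw [hk]
        simp only [max_eq_right (show x - δ ≤ 0 by linarith), mul_zero]
      · have hgx : g x = 1 := by
          rw [hg]
          refine min_eq_right ?_
          calc (1 : ℝ) = δ⁻¹ * δ := (inv_mul_cancel₀ hδ.ne').symm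
            _ ≤ δ⁻¹ * x := mul_le_mul_of_nonneg_left h.le (inv_nonneg.2 hδ.le)
        rw [hk, hgx, max_eq_left (by linarith), max_eq_left (by linarith)]
        have h1ε : (1 : ℝ) - ε ≠ 0 := by linarith
        rw [← mul_assoc, mul_inv_cancel₀ h1ε, one_mul]
        exact max_eq_left (by linarith)
    refine hcut I ?_
    rw [← hprod]
    exact I.mul_mem_right _ _ hI
  · have hgcfc : cfc g a = cfcₙ g a := (cfcₙ_eq_cfc hgc.continuousOn hg0).symm
    rw [hgcfc]
    exact cfcnAux_mul_eq_zero a x ha' hx1 hx2 g hgc hg0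

end Aux

/-- A unital C*-algebra has the `2`-splitting property if and only if it
contains two purely full pairwise orthogonal elements. -/
theorem twoSplitting_iff_purelyFull_orthogonal (A : Type*) [CStarAlgebra A] [PartialOrder A]
    [StarOrderedRing A] :
    TwoSplitting A ↔ ∃ a b : A, PurelyFull a ∧ PurelyFull b ∧ a * b = 0 := by
  constructor
  · rintro ⟨a, b, ha, hb, hafull, hbfull, hab⟩
    have hba : b * a = 0 := by
      have h := congrArg star hab
      rwa [star_mul, (IsSelfAdjoint.of_nonneg ha).star_eq,
        (IsSelfAdjoint.of_nonneg hb).star_eq, star_zero] at h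
    obtain ⟨a', hpa, hax⟩ := purelyFull_of_full a ha hafull
    obtain ⟨b', hpb, hbx⟩ := purelyFull_of_full b hb hbfull
    obtain ⟨h1, h2⟩ := hax b hab hba
    obtain ⟨h3, h4⟩ := hbx a' h2 h1
    exact ⟨a', b', hpa, hpb, h4⟩
  · rintro ⟨a, b, ⟨ha0, -, hafull⟩, ⟨hb0, -, hbfull⟩, hab⟩
    have key : ∀ c : A, 0 ≤ c → cfc (fun t : ℝ => max (t - 0) 0) c = c := by
      intro c hc
      have h := cfc_congr (a := c) (f := fun t : ℝ => max (t - 0) 0) (g := fun t : ℝ => t)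
        fun x hx => by
          have hx0 := spectrum_nonneg_of_nonneg hc hx
          simpa using max_eq_left hx0
      rw [h, cfc_id' ℝ c (IsSelfAdjoint.of_nonneg hc)]
    refine ⟨a, b, ha0, hb0, ?_, ?_, hab⟩
    · have h := hafull 0 le_rfl one_pos
      rwa [key a ha0] at h
    · have h := hbfull 0 le_rfl one_pos
      rwa [key b hb0] at h
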